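/- Let $\gamma : [0,1] \to \overline{B_R} \subset \mathbb{R}^2$ be a rectifiable curve from $A \in \partial B_R$ to $B \in \partial B_R$ whose length satisfies $\mathrm{Length}(\gamma) \le (1+\eta)|A - B|$ for some $0 \le \eta \le 1$. Then every point $y$ on the curve satisfies $\mathrm{dist}(y, \mathrm{conv}(A,B)) \le C \sqrt{\eta}\, |A - B|$ for a universal constant $C$ (one may take $C = 2$). -/

import Mathlib

open Metric

set_option maxHeartbeats 1000000 in
private lemma ellipse_geom (η : ℝ) (hη0 : 0 ≤ η) (hη1 : η ≤ 1)
    (A B y : EuclideanSpace ℝ (Fin 2))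
    (hsum : dist A y + dist y B ≤ (1 + η) * dist A B) :
    Metric.infDist y (segment ℝ A B) ≤ 2 * Real.sqrt η * dist A B := by
  have sqη := Real.sq_sqrt hη0
  have sqηnn := Real.sqrt_nonneg η
  set d := dist A B with hd
  have hd0 : 0 ≤ d := dist_nonneg
  rcases eq_or_lt_of_le hd0 with hdz | hdpos
  · -- degenerate case d = 0
    have hs0 : dist y A = 0 := by
      have h1 : dist A y ≥ 0 := dist_nonneg
      have h2 : dist y B ≥ 0 := dist_nonneg
      have : dist A y = 0 := by nlinarith
      rwa [dist_comm] at this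
    calc Metric.infDist y (segment ℝ A B) ≤ dist y A :=
          Metric.infDist_le_dist_of_mem (left_mem_segment ℝ A B)
      _ = 0 := hs0
      _ ≤ 2 * Real.sqrt η * d := by positivity
  · -- main case d > 0
    set s := dist A y with hs
    set t := dist y B with ht
    have hs0 : 0 ≤ s := dist_nonneg
    have ht0 : 0 ≤ t := dist_nonneg
    set u : EuclideanSpace ℝ (Fin 2) := B - A with hu
    have hnu : ‖u‖ = d := by rw [hu, hd, dist_comm]; exact (dist_eq_norm B A).symm
    set x : ℝ := inner ℝ (y - A) u with hx
    have hd2 : d ^ 2 ≠ 0 := by positivity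
    set w : EuclideanSpace ℝ (Fin 2) := (y - A) - (x / d ^ 2) • u with hw
    have hwu : (inner ℝ w u : ℝ) = 0 := by
      rw [hw, inner_sub_left, real_inner_smul_left, real_inner_self_eq_norm_sq, hnu, ← hx]
      field_simp
      ring
    set h := ‖w‖ with hh
    have hh0 : 0 ≤ h := norm_nonneg _
    set a := x / d with ha
    have hyA : y - A = w + (x / d ^ 2) • u := by rw [hw]; abel
    have hs2 : s ^ 2 = h ^ 2 + a ^ 2 := by
      have : s = ‖y - A‖ := by rw [hs, dist_comm, dist_eq_norm]
      rw [this, hyA, norm_add_sq_real, real_inner_smul_right, hwu, norm_smul, hnu, hh]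
      rw [ha]
      field_simp
      simp only [mul_pow, Real.norm_eq_abs, sq_abs]
      field_simp
      ring
    have hyB : y - B = w + ((x - d ^ 2) / d ^ 2) • u := by
      rw [hw, hu]
      have : ((x - d ^ 2) / d ^ 2) = x / d ^ 2 - 1 := by field_simp
      rw [this, sub_smul, one_smul]
      abel
    have ht2 : t ^ 2 = h ^ 2 + (a - d) ^ 2 := by
      have : t = ‖y - B‖ := by rw [ht, dist_eq_norm]
      rw [this, hyB, norm_add_sq_real, real_inner_smul_right, hwu, norm_smul, hnu, hh]
      rw [ha]
      field_simp
      simp only [mul_pow, Real.norm_eq_abs, sq_abs]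
      field_simp
      ring
    clear_value h a x s t d
    rcases le_or_gt x 0 with hxneg | hxpos
    · -- a ≤ 0 : y is close to A
      have ha0 : a ≤ 0 := by rw [ha]; exact div_nonpos_of_nonpos_of_nonneg hxneg hd0
      clear hwu hyA hyB hw hh hx hu hnu
      clear w u
      have htge : d - a ≤ t := by nlinarith [sq_nonneg h]
      have hsle : s ≤ η * d := by nlinarith
      calc Metric.infDist y (segment ℝ A B) ≤ dist y A :=
            Metric.infDist_le_dist_of_mem (left_mem_segment ℝ A B)
        _ = s := by rw [hs, dist_comm]
        _ ≤ η * d := hsle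
        _ ≤ 2 * Real.sqrt η * d := by nlinarith
    rcases le_or_gt (d ^ 2) x with hxbig | hxmid
    · -- a ≥ d : y is close to B
      have had : d ≤ a := by rw [ha]; rw [le_div_iff₀ hdpos]; nlinarith
      clear hwu hyA hyB hw hh hx hu hnu
      clear w u
      have hsge : a ≤ s := by nlinarith [sq_nonneg h]
      have htle : t ≤ η * d := by nlinarith
      calc Metric.infDist y (segment ℝ A B) ≤ dist y B :=
            Metric.infDist_le_dist_of_mem (right_mem_segment ℝ A B)
        _ = t := ht.symm
        _ ≤ η * d := htle
        _ ≤ 2 * Real.sqrt η * d := by nlinarith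
    · -- 0 < a < d : foot of perpendicular lies inside the segment
      have ha1 : 0 < a := by rw [ha]; exact div_pos hxpos hdpos
      have ha2 : a < d := by rw [ha, div_lt_iff₀ hdpos]; nlinarith
      set P : EuclideanSpace ℝ (Fin 2) := A + (x / d ^ 2) • (B - A) with hP
      have hPmem : P ∈ segment ℝ A B := by
        rw [segment_eq_image']
        refine ⟨x / d ^ 2, ⟨?_, ?_⟩, rfl⟩
        · positivity
        · rw [div_le_one (by positivity)]; exact hxmid.le
      have hdist : dist y P = h := by
        rw [dist_eq_norm, hh]
        congr 1
        rw [hP, hw, hu]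
        abel
      clear hwu hyA hyB hw hh hx hu hnu
      clear w u
      -- the height bound
      have hst : s * t ≥ h ^ 2 + a * (d - a) := by
        have hX : 0 ≤ h ^ 2 + a * (d - a) := by nlinarith
        have hsq : (h ^ 2 + a * (d - a)) ^ 2 ≤ (s * t) ^ 2 := by
          nlinarith [sq_nonneg (h * (2 * a - d)), sq_nonneg h]
        nlinarith [mul_nonneg hs0 ht0]
      have hkey : 4 * h ^ 2 + d ^ 2 ≤ (s + t) ^ 2 := by nlinarith
      have hub : (s + t) ^ 2 ≤ (1 + η) ^ 2 * d ^ 2 := by nlinarith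
      have hh2 : h ^ 2 ≤ 3 * η * d ^ 2 / 4 := by nlinarith
      have hfin : h ≤ 2 * Real.sqrt η * d := by nlinarith [mul_nonneg sqηnn hd0]
      calc Metric.infDist y (segment ℝ A B) ≤ dist y P :=
            Metric.infDist_le_dist_of_mem hPmem
        _ = h := hdist
        _ ≤ 2 * Real.sqrt η * d := hfin

/-- height bound. A rectifiable curve in the closed ball `B_R` from `A` to `B`
(on the boundary sphere) of length at most `(1+η)|A-B|` stays within distance
`2√η · |A-B|` of the segment `conv(A,B)`. -/
theorem stmt_2 (R η : ℝ) (hR : 0 < R) (hη0 : 0 ≤ η) (hη1 : η ≤ 1)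
    (A B : EuclideanSpace ℝ (Fin 2)) (hA : ‖A‖ = R) (hB : ‖B‖ = R)
    (γ : ℝ → EuclideanSpace ℝ (Fin 2))
    (hcont : ContinuousOn γ (Set.Icc 0 1))
    (hmaps : ∀ t ∈ Set.Icc (0 : ℝ) 1, ‖γ t‖ ≤ R)
    (h0 : γ 0 = A) (h1 : γ 1 = B)
    (hlen : eVariationOn γ (Set.Icc 0 1) ≤ ENNReal.ofReal ((1 + η) * dist A B)) :
    ∀ t ∈ Set.Icc (0 : ℝ) 1,
      Metric.infDist (γ t) (segment ℝ A B) ≤ 2 * Real.sqrt η * dist A B := by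
  intro t ht
  obtain ⟨ht0, ht1⟩ := ht
  have e1 : edist (γ 0) (γ t) ≤ eVariationOn γ (Set.Icc 0 t) :=
    eVariationOn.edist_le γ (Set.left_mem_Icc.2 ht0) (Set.right_mem_Icc.2 ht0)
  have e2 : edist (γ t) (γ 1) ≤ eVariationOn γ (Set.Icc t 1) :=
    eVariationOn.edist_le γ (Set.left_mem_Icc.2 ht1) (Set.right_mem_Icc.2 ht1)
  have heq : eVariationOn γ (Set.Icc 0 t) + eVariationOn γ (Set.Icc t 1)
      = eVariationOn γ (Set.Icc 0 1) := by
    have := eVariationOn.Icc_add_Icc γ (s := Set.univ) ht0 ht1 (Set.mem_univ t)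
    simpa using this
  have hsum' : edist (γ 0) (γ t) + edist (γ t) (γ 1)
      ≤ ENNReal.ofReal ((1 + η) * dist A B) := by
    calc edist (γ 0) (γ t) + edist (γ t) (γ 1)
        ≤ eVariationOn γ (Set.Icc 0 t) + eVariationOn γ (Set.Icc t 1) := add_le_add e1 e2
      _ = eVariationOn γ (Set.Icc 0 1) := heq
      _ ≤ ENNReal.ofReal ((1 + η) * dist A B) := hlen
  rw [edist_dist, edist_dist, ← ENNReal.ofReal_add dist_nonneg dist_nonneg,
    ENNReal.ofReal_le_ofReal_iff (by positivity)] at hsum'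
  rw [h0, h1] at hsum'
  exact ellipse_geom η hη0 hη1 A B (γ t) hsum'
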